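/- Let b ∈ ℝ with b² < 1 and let (X_i)_{i∈ℤ} be a bounded real sequence with sup_i |X_i| ≤ M and |b|·M < 1. Define ε_i = X_i + Σ_{j≥1} (−b)^j X_{i−j} ∏_{k=1}^{j} X_{i−k−1}. Then the series converges absolutely and X_i = b X_{i−2} ( X_{i−1} + Σ_{j≥1} (−b)^j X_{i−j−1} ∏_{k=1}^{j} X_{i−k−2} ) + ε_i. -/

import Mathlib

theorem stmt_3 (b : ℝ) (hb : b ^ 2 < 1) (X ε : ℤ → ℝ) (M : ℝ)
    (hM : ∀ i, |X i| ≤ M) (hbM : |b| * M < 1)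
    (hε : ∀ i : ℤ, ε i = X i + ∑' j : ℕ,
      (-b) ^ (j + 1) * X (i - (j + 1)) * ∏ k ∈ Finset.Icc 1 (j + 1), X (i - (k : ℤ) - 1)) :
    (∀ i : ℤ, Summable (fun j : ℕ =>
      (-b) ^ (j + 1) * X (i - (j + 1)) * ∏ k ∈ Finset.Icc 1 (j + 1), X (i - (k : ℤ) - 1))) ∧
    (∀ i : ℤ, X i = b * X (i - 2) * (X (i - 1) + ∑' j : ℕ,
      (-b) ^ (j + 1) * X (i - (j + 1) - 1) *
        ∏ k ∈ Finset.Icc 1 (j + 1), X (i - (k : ℤ) - 2)) + ε i) := by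
  have hM0 : 0 ≤ M := le_trans (abs_nonneg _) (hM 0)
  have hb0 : 0 ≤ |b| * M := mul_nonneg (abs_nonneg b) hM0
  set F : ℤ → ℕ → ℝ := fun i j =>
    (-b) ^ (j + 1) * X (i - (j + 1)) * ∏ k ∈ Finset.Icc 1 (j + 1), X (i - (k : ℤ) - 1) with hF
  have hIcc : ∀ (i : ℤ) (n : ℕ), (∏ k ∈ Finset.Icc 1 n, X (i - (k : ℤ) - 1))
      = ∏ r ∈ Finset.range n, X (i - (r : ℤ) - 2) := by
    intro i n
    induction n with
    | zero => simp
    | succ m ih =>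
      rw [Finset.prod_Icc_succ_top (Nat.le_add_left 1 m), ih, Finset.prod_range_succ]
      congr 2
      push_cast; ring
  have hsum : ∀ i, Summable (F i) := by
    intro i
    apply Summable.of_norm_bounded (g := fun j => (M * (|b| * M)) * (|b| * M) ^ j)
      ((summable_geometric_of_lt_one hb0 hbM).mul_left _)
    intro j
    have hprod : |∏ k ∈ Finset.Icc 1 (j + 1), X (i - (k : ℤ) - 1)| ≤ M ^ (j + 1) := by
      rw [Finset.abs_prod]
      calc (∏ k ∈ Finset.Icc 1 (j + 1), |X (i - (k : ℤ) - 1)|)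
          ≤ ∏ k ∈ Finset.Icc 1 (j + 1), M :=
            Finset.prod_le_prod (fun k _ => abs_nonneg _) (fun k _ => hM _)
        _ = M ^ (j + 1) := by
            rw [Finset.prod_const, Nat.card_Icc, Nat.add_sub_cancel]
    have h1 : ‖F i j‖ = |(-b) ^ (j + 1)| * |X (i - ((j : ℤ) + 1))|
        * |∏ k ∈ Finset.Icc 1 (j + 1), X (i - (k : ℤ) - 1)| := by
      rw [Real.norm_eq_abs, abs_mul, abs_mul]
    rw [h1, abs_pow, abs_neg]
    calc |b| ^ (j + 1) * |X (i - ((j : ℤ) + 1))|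
          * |∏ k ∈ Finset.Icc 1 (j + 1), X (i - (k : ℤ) - 1)|
        ≤ |b| ^ (j + 1) * M * M ^ (j + 1) :=
          mul_le_mul (mul_le_mul le_rfl (hM _) (abs_nonneg _)
              (pow_nonneg (abs_nonneg b) _)) hprod (abs_nonneg _)
            (mul_nonneg (pow_nonneg (abs_nonneg b) _) hM0)
      _ = (M * (|b| * M)) * (|b| * M) ^ j := by
          rw [mul_pow]; ring
  have key : ∀ (i : ℤ) (j : ℕ), F i (j + 1) = (-b * X (i - 2)) * F (i - 1) j := by
    intro i j
    have hp : (∏ x ∈ Finset.range (j + 1), X (i - ((x + 1 : ℕ) : ℤ) - 2))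
        = ∏ x ∈ Finset.range (j + 1), X (i - 1 - (x : ℤ) - 2) := by
      apply Finset.prod_congr rfl; intro x _; congr 1; push_cast; ring
    simp only [F]
    rw [hIcc i, hIcc (i - 1), Finset.prod_range_succ', hp,
      show i - (((j + 1 : ℕ) : ℤ) + 1) = i - 1 - ((j : ℤ) + 1) by push_cast; ring,
      show i - ((0 : ℕ) : ℤ) - 2 = i - 2 by push_cast; ring]
    ring
  refine ⟨hsum, fun i => ?_⟩
  have hbr : (∑' j : ℕ, (-b) ^ (j + 1) * X (i - (j + 1) - 1) *
      ∏ k ∈ Finset.Icc 1 (j + 1), X (i - (k : ℤ) - 2)) = ∑' j, F (i - 1) j := by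
    apply tsum_congr
    intro j
    simp only [F]
    congr 1
    · congr 1; ring
    · apply Finset.prod_congr rfl
      intro k _
      congr 1; ring
  have hS : (∑' j, F i j) = F i 0 + ∑' j, F i (j + 1) := Summable.tsum_eq_zero_add (hsum i)
  have hS2 : (∑' j, F i (j + 1)) = (-b * X (i - 2)) * ∑' j, F (i - 1) j := by
    simp only [key]
    exact tsum_mul_left
  have hF0 : F i 0 = -b * X (i - 1) * X (i - 2) := by
    simp only [F]
    rw [hIcc]
    norm_num
  have e1 : ε i = X i + ∑' j, F i j := hε i
  rw [hbr, e1, hS, hS2, hF0]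
  ring
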